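/- Let G = K1 ∨ K_{3,3} (one vertex joined to all six vertices of the complete bipartite graph K_{3,3}), and let x be the apex vertex and y any vertex of the K_{3,3}. Then G contains three (x,y)-paths P1, P2, P3 with ||P1|| > ||P2|| > ||P3|| ≥ 2 such that either the three lengths form an arithmetic progression with common difference 2, or {||P1||-||P2||, ||P2||-||P3||} = {1,2}. -/

import Mathlib

open SimpleGraph

/-- `G` is `k`-connected: more than `k` vertices, and deleting any set of fewer than
`k` vertices leaves a connected graph. -/
def KConnected {V : Type*} (G : SimpleGraph V) (k : ℕ) : Prop :=
  k < Nat.card V ∧ ∀ S : Set V, S.Finite → S.ncard < k → (G.induce Sᶜ).Connected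

/-- `G + xy`: the graph `G` with the edge `xy` added (equal to `G` if already present). -/
def AddEdge {V : Type*} (G : SimpleGraph V) (x y : V) : SimpleGraph V :=
  G ⊔ SimpleGraph.fromEdgeSet {s(x, y)}

/-- `G` has a cycle of length `n`. -/
def HasCycleLength {V : Type*} (G : SimpleGraph V) (n : ℕ) : Prop :=
  ∃ (v : V) (c : G.Walk v v), c.IsCycle ∧ c.length = n

/-- `G` contains `k` cycles of consecutive lengths. -/
def HasConsecCycles {V : Type*} (G : SimpleGraph V) (k : ℕ) : Prop :=
  ∃ m : ℕ, ∀ i < k, HasCycleLength G (m + i)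
/-- Three path lengths `a > b > c ≥ 2` are *good* if they form an arithmetic progression
with common difference 2, or the two differences are `{1, 2}` in some order. -/
def GoodTriple (a b c : ℕ) : Prop :=
  2 ≤ c ∧ c < b ∧ b < a ∧
    ((a = b + 2 ∧ b = c + 2) ∨ (a = b + 1 ∧ b = c + 2) ∨ (a = b + 2 ∧ b = c + 1))
/-- The join `G ∨ H` of two graphs: their disjoint union plus all edges between them. -/
def GJoin {α β : Type*} (G : SimpleGraph α) (H : SimpleGraph β) : SimpleGraph (α ⊕ β) where
  Adj a b := match a, b with
    | .inl a, .inl b => G.Adj a b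
    | .inr a, .inr b => H.Adj a b
    | _, _ => True
  symm := ⟨by rintro (a|a) (b|b) h <;> simp_all <;> exact h.symm⟩
  loopless := ⟨by rintro (a|a) h <;> simp_all⟩
abbrev G0 := GJoin (⊤ : SimpleGraph (Fin 1)) (completeBipartiteGraph (Fin 3) (Fin 3))

def xx : Fin 1 ⊕ (Fin 3 ⊕ Fin 3) := Sum.inl 0
def ll (i : Fin 3) : Fin 1 ⊕ (Fin 3 ⊕ Fin 3) := Sum.inr (Sum.inl i)
def rr (i : Fin 3) : Fin 1 ⊕ (Fin 3 ⊕ Fin 3) := Sum.inr (Sum.inr i)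

lemma adj_x_l (i : Fin 3) : G0.Adj xx (ll i) := by trivial
lemma adj_x_r (i : Fin 3) : G0.Adj xx (rr i) := by trivial
lemma adj_l_r (i j : Fin 3) : G0.Adj (ll i) (rr j) := by
  show (completeBipartiteGraph (Fin 3) (Fin 3)).Adj _ _
  simp [ll, rr]
lemma adj_r_l (i j : Fin 3) : G0.Adj (rr i) (ll j) := (adj_l_r j i).symm

def P3l (a : Fin 3) : G0.Walk xx (ll a) :=
  .cons (adj_x_r 0) (.cons (adj_r_l 0 a) .nil)
def P2l (a b : Fin 3) : G0.Walk xx (ll a) :=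
  .cons (adj_x_r 0) (.cons (adj_r_l 0 b) (.cons (adj_l_r b 1) (.cons (adj_r_l 1 a) .nil)))
def P1l (a b c : Fin 3) : G0.Walk xx (ll a) :=
  .cons (adj_x_r 0) (.cons (adj_r_l 0 b) (.cons (adj_l_r b 1) (.cons (adj_r_l 1 c)
    (.cons (adj_l_r c 2) (.cons (adj_r_l 2 a) .nil)))))

lemma P3l_path (a : Fin 3) : (P3l a).IsPath := by
  simp only [P3l, Walk.isPath_def, Walk.support_cons, Walk.support_nil]; simp [xx, ll, rr]
lemma P2l_path (a b : Fin 3) (h : a ≠ b) : (P2l a b).IsPath := by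
  simp only [P2l, Walk.isPath_def, Walk.support_cons, Walk.support_nil]; simp [xx, ll, rr, h.symm]
lemma P1l_path (a b c : Fin 3) (hab : a ≠ b) (hac : a ≠ c) (hbc : b ≠ c) :
    (P1l a b c).IsPath := by
  simp only [P1l, Walk.isPath_def, Walk.support_cons, Walk.support_nil]; simp [xx, ll, rr, hab.symm, hac.symm, hbc, hbc.symm]

def P3r (a : Fin 3) : G0.Walk xx (rr a) :=
  .cons (adj_x_l 0) (.cons (adj_l_r 0 a) .nil)
def P2r (a b : Fin 3) : G0.Walk xx (rr a) :=
  .cons (adj_x_l 0) (.cons (adj_l_r 0 b) (.cons (adj_r_l b 1) (.cons (adj_l_r 1 a) .nil)))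
def P1r (a b c : Fin 3) : G0.Walk xx (rr a) :=
  .cons (adj_x_l 0) (.cons (adj_l_r 0 b) (.cons (adj_r_l b 1) (.cons (adj_l_r 1 c)
    (.cons (adj_r_l c 2) (.cons (adj_l_r 2 a) .nil)))))

lemma P3r_path (a : Fin 3) : (P3r a).IsPath := by
  simp only [P3r, Walk.isPath_def, Walk.support_cons, Walk.support_nil]; simp [xx, ll, rr]
lemma P2r_path (a b : Fin 3) (h : a ≠ b) : (P2r a b).IsPath := by
  simp only [P2r, Walk.isPath_def, Walk.support_cons, Walk.support_nil]; simp [xx, ll, rr, h.symm]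
lemma P1r_path (a b c : Fin 3) (hab : a ≠ b) (hac : a ≠ c) (hbc : b ≠ c) :
    (P1r a b c).IsPath := by
  simp only [P1r, Walk.isPath_def, Walk.support_cons, Walk.support_nil]; simp [xx, ll, rr, hab.symm, hac.symm, hbc, hbc.symm]

lemma good642 : GoodTriple 6 4 2 :=
  ⟨by norm_num, by norm_num, by norm_num, Or.inl ⟨rfl, rfl⟩⟩

/-- In `K1 ∨ K_{3,3}`, with `x` the apex and `y` any vertex of the `K_{3,3}`, there are
three good `(x,y)`-paths. -/
theorem join_K33_three_good_paths (y : Fin 3 ⊕ Fin 3) :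
    ∃ (P1 P2 P3 : (GJoin (⊤ : SimpleGraph (Fin 1))
        (completeBipartiteGraph (Fin 3) (Fin 3))).Walk (Sum.inl 0) (Sum.inr y)),
      P1.IsPath ∧ P2.IsPath ∧ P3.IsPath ∧
        GoodTriple P1.length P2.length P3.length := by
  rcases y with a | a <;> fin_cases a
  · exact ⟨P1l 0 1 2, P2l 0 1, P3l 0, P1l_path 0 1 2 (by decide) (by decide) (by decide),
      P2l_path 0 1 (by decide), P3l_path 0, good642⟩
  · exact ⟨P1l 1 0 2, P2l 1 0, P3l 1, P1l_path 1 0 2 (by decide) (by decide) (by decide),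
      P2l_path 1 0 (by decide), P3l_path 1, good642⟩
  · exact ⟨P1l 2 0 1, P2l 2 0, P3l 2, P1l_path 2 0 1 (by decide) (by decide) (by decide),
      P2l_path 2 0 (by decide), P3l_path 2, good642⟩
  · exact ⟨P1r 0 1 2, P2r 0 1, P3r 0, P1r_path 0 1 2 (by decide) (by decide) (by decide),
      P2r_path 0 1 (by decide), P3r_path 0, good642⟩
  · exact ⟨P1r 1 0 2, P2r 1 0, P3r 1, P1r_path 1 0 2 (by decide) (by decide) (by decide),
      P2r_path 1 0 (by decide), P3r_path 1, good642⟩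
  · exact ⟨P1r 2 0 1, P2r 2 0, P3r 2, P1r_path 2 0 1 (by decide) (by decide) (by decide),
      P2r_path 2 0 (by decide), P3r_path 2, good642⟩
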